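/- Every automorphism of G₆ maps the translation subgroup T onto itself (T is characteristic in G₆), and the induced homomorphism from Out(G₆) to Aut(G₆/T) is surjective, with kernel the subgroup of Out(G₆) generated by the images of the automorphisms a, b, c and e. (Here G₆/T ≅ (ℤ/2ℤ)², so Aut(G₆/T) ≅ GL(2,𝔽₂).) -/

import Mathlib

/-! `Aff(3) = ℝ³ ⋊ GL(3,ℝ)`, realized as the group of affine self-equivalences of `ℝ³`
(with multiplication given by composition, so that `(v,A)(w,B) = (v + Aw, AB)`). -/

abbrev V3 : Type := Fin 3 → ℝ
abbrev Aff3 : Type := V3 ≃ᵃ[ℝ] V3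

/-- The linear self-equivalence of `ℝ³` given by a diagonal matrix with entries `±1`. -/
noncomputable def diagLin (d : Fin 3 → ℝ) (hd : ∀ i, d i * d i = 1) : V3 ≃ₗ[ℝ] V3 where
  toFun v := fun i => d i * v i
  invFun v := fun i => d i * v i
  map_add' u v := by funext i; simp [mul_add]
  map_smul' c v := by funext i; simp [smul_eq_mul]; ring
  left_inv v := by funext i; simp [← mul_assoc, hd i]
  right_inv v := by funext i; simp [← mul_assoc, hd i]

lemma sq_one_X : ∀ i, (![(1:ℝ),-1,-1]) i * (![(1:ℝ),-1,-1]) i = 1 := by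
  intro i; fin_cases i <;> norm_num

lemma sq_one_Y : ∀ i, (![(-1:ℝ),1,-1]) i * (![(-1:ℝ),1,-1]) i = 1 := by
  intro i; fin_cases i <;> norm_num

/-- The affine transformation `x = (½e₁, X)`, acting by `w ↦ Xw + ½e₁`,
where `X = diag[1,−1,−1]`. -/
noncomputable def affx : Aff3 :=
  ((diagLin ![1,-1,-1] sq_one_X).toAffineEquiv).trans
    (AffineEquiv.constVAdd ℝ V3 ![1/2, 0, 0])

/-- The affine transformation `y = (½(e₂−e₃), Y)`, acting by `w ↦ Yw + ½(e₂−e₃)`,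
where `Y = diag[−1,1,−1]`. -/
noncomputable def affy : Aff3 :=
  ((diagLin ![-1,1,-1] sq_one_Y).toAffineEquiv).trans
    (AffineEquiv.constVAdd ℝ V3 ![0, 1/2, -1/2])

/-- `z = xy = (½(e₁−e₂+e₃), Z)`. -/
noncomputable def affz : Aff3 := affx * affy

/-- The Hantzsche–Wendt group `G₆`, the subgroup of `Aff(3)` generated by `x` and `y`. -/
noncomputable def G6 : Subgroup Aff3 := Subgroup.closure {affx, affy}

/-- The translation subgroup `T = G₆ ∩ (ℝ³ × {I})`: the elements of `G₆`
whose linear part is the identity. -/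
noncomputable def TT : Subgroup Aff3 :=
  G6 ⊓ (AffineEquiv.linearHom : Aff3 →* (V3 ≃ₗ[ℝ] V3)).ker

lemma affx_mem : affx ∈ G6 := Subgroup.subset_closure (by simp)
lemma affy_mem : affy ∈ G6 := Subgroup.subset_closure (by simp)

/-- `x` as an element of `G₆`. -/
noncomputable def xg : G6 := ⟨affx, affx_mem⟩
/-- `y` as an element of `G₆`. -/
noncomputable def yg : G6 := ⟨affy, affy_mem⟩
/-- `z = xy` as an element of `G₆`. -/
noncomputable def zg : G6 := xg * yg

/-! ### Basic computation lemmas -/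

noncomputable def tr (t : Fin 3 → ℤ) : Aff3 := AffineEquiv.constVAdd ℝ V3 (fun i => (t i : ℝ))

lemma aff_mul_apply (g h : Aff3) (p : V3) : (g * h) p = g (h p) := rfl
lemma aff_one_apply (p : V3) : (1 : Aff3) p = p := rfl

lemma tr_apply (t : Fin 3 → ℤ) (p : V3) (i : Fin 3) : tr t p i = t i + p i := rfl

lemma affx_apply (p : V3) (i : Fin 3) :
    affx p i = ![(1:ℝ),-1,-1] i * p i + ![(1:ℝ)/2,0,0] i := by
  simp [affx, diagLin, AffineEquiv.trans_apply]; ring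
lemma affy_apply (p : V3) (i : Fin 3) :
    affy p i = ![(-1:ℝ),1,-1] i * p i + ![(0:ℝ),1/2,-1/2] i := by
  simp [affy, diagLin, AffineEquiv.trans_apply]; ring

lemma tr_mul (t s : Fin 3 → ℤ) : tr t * tr s = tr (t + s) := by
  ext p; simp [aff_mul_apply, tr_apply]; push_cast; ring

lemma tr_zero : tr 0 = 1 := by
  ext p; simp [tr_apply, aff_one_apply]

lemma tr_inv (t : Fin 3 → ℤ) : (tr t)⁻¹ = tr (-t) := by
  apply inv_eq_of_mul_eq_one_right
  rw [tr_mul]; simpa using tr_zero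

lemma tr_injective : Function.Injective tr := by
  intro t s h
  funext i
  have := congrFun (congrArg (fun (g : Aff3) => (g : V3 → V3) 0) h) i
  simp only [tr_apply] at this
  exact_mod_cast by simpa using this

/-- representatives 1, x, y, z -/
noncomputable def rep : Fin 4 → Aff3 := ![1, affx, affy, affz]

/-- the `C2×C2` multiplication -/
def mm : Fin 4 → Fin 4 → Fin 4 := ![![0,1,2,3],![1,0,3,2],![2,3,0,1],![3,2,1,0]]

/-- translation cocycle -/
def cc : Fin 4 → Fin 4 → (Fin 3 → ℤ) :=
  ![![![0,0,0], ![0,0,0], ![0,0,0], ![0,0,0]],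
    ![![0,0,0], ![1,0,0], ![0,0,0], ![1,0,0]],
    ![![0,0,0], ![-1,1,-1], ![0,1,0], ![-1,0,-1]],
    ![![0,0,0], ![0,-1,1], ![0,-1,0], ![0,0,1]]]

/-- the linear action of representative `k` on translations -/
def mk3 : Fin 4 → (Fin 3 → ℤ) → (Fin 3 → ℤ) :=
  ![fun s => s, fun s => ![s 0, -s 1, -s 2], fun s => ![-s 0, s 1, -s 2],
    fun s => ![-s 0, -s 1, s 2]]

lemma rep_tr (k : Fin 4) (s : Fin 3 → ℤ) : rep k * tr s = tr (mk3 k s) * rep k := by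
  fin_cases k <;> ext p i <;> fin_cases i <;>
    simp [rep, mk3, affz, aff_mul_apply, tr_apply, affx_apply, affy_apply, aff_one_apply] <;>
    push_cast <;> ring

lemma rep_mul (k k' : Fin 4) : rep k * rep k' = tr (cc k k') * rep (mm k k') := by
  fin_cases k <;> fin_cases k' <;> ext p i <;> fin_cases i <;>
    simp [rep, mm, cc, Matrix.vecHead, Matrix.vecTail, affz, aff_mul_apply, tr_apply, affx_apply, affy_apply, aff_one_apply] <;>
    push_cast <;> ring
/-! ### Structure of G6 -/

lemma tr_rep_mul (t : Fin 3 → ℤ) (k : Fin 4) (s : Fin 3 → ℤ) (k' : Fin 4) :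
    (tr t * rep k) * (tr s * rep k') = tr (t + mk3 k s + cc k k') * rep (mm k k') := by
  calc (tr t * rep k) * (tr s * rep k')
      = tr t * (rep k * tr s) * rep k' := by group
    _ = tr t * (tr (mk3 k s) * rep k) * rep k' := by rw [rep_tr]
    _ = (tr t * tr (mk3 k s)) * (rep k * rep k') := by group
    _ = tr (t + mk3 k s) * (tr (cc k k') * rep (mm k k')) := by rw [tr_mul, rep_mul]
    _ = (tr (t + mk3 k s) * tr (cc k k')) * rep (mm k k') := by group
    _ = tr (t + mk3 k s + cc k k') * rep (mm k k') := by rw [tr_mul]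

lemma mm_self (k : Fin 4) : mm k k = 0 := by fin_cases k <;> rfl

lemma rep_zero : rep 0 = 1 := rfl

lemma tr_rep_inv (t : Fin 3 → ℤ) (k : Fin 4) :
    (tr t * rep k)⁻¹ = tr (-(cc k k) + mk3 k (-t)) * rep k := by
  apply inv_eq_of_mul_eq_one_left
  rw [tr_rep_mul]
  have h1 : mm k k = 0 := mm_self k
  rw [h1, rep_zero, mul_one]
  have h2 : -cc k k + mk3 k (-t) + mk3 k t + cc k k = 0 := by
    fin_cases k <;> funext i <;> fin_cases i <;> simp [mk3, cc, Matrix.vecHead, Matrix.vecTail] <;> ring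
  rw [h2, tr_zero]

lemma g6_struct : ∀ g ∈ G6, ∃ (t : Fin 3 → ℤ) (k : Fin 4), g = tr t * rep k := by
  intro g hg
  induction hg using Subgroup.closure_induction with
  | mem g hg =>
    rcases hg with h | h
    · exact ⟨0, 1, by rw [h, tr_zero, one_mul]; rfl⟩
    · exact ⟨0, 2, by rw [h, tr_zero, one_mul]; rfl⟩
  | one => exact ⟨0, 0, by rw [tr_zero, rep_zero, one_mul]⟩
  | mul g h _ _ ihg ihh =>
    obtain ⟨t, k, rfl⟩ := ihg
    obtain ⟨s, k', rfl⟩ := ihh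
    exact ⟨_, _, tr_rep_mul t k s k'⟩
  | inv g _ ihg =>
    obtain ⟨t, k, rfl⟩ := ihg
    exact ⟨_, _, tr_rep_inv t k⟩

/-! ### Linear parts -/

def sgn : Fin 4 → Fin 3 → ℝ := ![![1,1,1],![1,-1,-1],![-1,1,-1],![-1,-1,1]]

lemma lin_apply (g : Aff3) (v : V3) (i : Fin 3) :
    (AffineEquiv.linearHom g : V3 ≃ₗ[ℝ] V3) v i = g v i - g 0 i := by
  have h := g.map_vadd 0 v
  have h2 : v +ᵥ (0 : V3) = v := by funext j; simp [Pi.vadd_def]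
  rw [h2] at h
  have : (g.linear v) i = g v i - g 0 i := by
    rw [h]; simp [Pi.vadd_def]
  exact this

lemma lin_rep_apply (k : Fin 4) (p : V3) (i : Fin 3) :
    (AffineEquiv.linearHom (rep k) : V3 ≃ₗ[ℝ] V3) p i = sgn k i * p i := by
  rw [lin_apply]
  fin_cases k <;> fin_cases i <;>
    simp [rep, sgn, affz, aff_mul_apply, affx_apply, affy_apply, aff_one_apply,
      Matrix.vecHead, Matrix.vecTail] <;> ring
lemma lin_rep_inj {k k' : Fin 4}
    (h : AffineEquiv.linearHom (rep k) = AffineEquiv.linearHom (rep k')) : k = k' := by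
  have hs : ∀ i, sgn k i = sgn k' i := by
    intro i
    have h0 := congrArg (fun (L : V3 ≃ₗ[ℝ] V3) => L (fun _ => (1:ℝ)) i) h
    have e1 := lin_rep_apply k (fun _ => (1:ℝ)) i
    have e2 := lin_rep_apply k' (fun _ => (1:ℝ)) i
    try simp only [] at h0
    rw [e1, e2] at h0
    simpa using h0
  have h0 := hs 0; have h1 := hs 1; have h2 := hs 2
  fin_cases k <;> fin_cases k' <;> first
    | rfl
    | (exfalso; simp [sgn, Matrix.vecHead, Matrix.vecTail] at h0 h1 h2 <;> linarith)

lemma lin_tr (t : Fin 3 → ℤ) : AffineEquiv.linearHom (tr t) = 1 := by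
  apply LinearEquiv.ext
  intro v; funext i
  rw [lin_apply (tr t) v i]
  simp [tr_apply]

lemma lin_tr_rep (t : Fin 3 → ℤ) (k : Fin 4) :
    AffineEquiv.linearHom (tr t * rep k) = AffineEquiv.linearHom (rep k) := by
  rw [map_mul, lin_tr, one_mul]

/-! ### G6 level -/

lemma tr_as_word (t : Fin 3 → ℤ) :
    tr t = affx ^ (2 * t 0) * affy ^ (2 * t 1) * affz ^ (2 * t 2) := by
  have hx : affx ^ (2 : ℤ) = tr ![1,0,0] := by
    rw [show ((2:ℤ) = (2:ℕ)) from rfl, zpow_natCast]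
    rw [pow_two]
    have := rep_mul 1 1
    simpa [rep, mm, cc, Matrix.vecHead, Matrix.vecTail, rep_zero] using this
  have hy : affy ^ (2 : ℤ) = tr ![0,1,0] := by
    rw [show ((2:ℤ) = (2:ℕ)) from rfl, zpow_natCast, pow_two]
    have := rep_mul 2 2
    simpa [rep, mm, cc, Matrix.vecHead, Matrix.vecTail, rep_zero] using this
  have hz : affz ^ (2 : ℤ) = tr ![0,0,1] := by
    rw [show ((2:ℤ) = (2:ℕ)) from rfl, zpow_natCast, pow_two]
    have := rep_mul 3 3
    simpa [rep, mm, cc, Matrix.vecHead, Matrix.vecTail, rep_zero] using this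
  have trpow : ∀ (s : Fin 3 → ℤ) (n : ℤ), (tr s) ^ n = tr (n • s) := by
    intro s n
    induction n using Int.induction_on with
    | zero => simp [tr_zero]
    | succ m ih => rw [zpow_add_one, ih, tr_mul]; congr 1; funext i; simp; ring
    | pred m ih => rw [zpow_sub_one, ih, tr_inv, tr_mul]; congr 1; funext i; simp; ring
  have key : ∀ u : Aff3, ∀ m : ℤ, u ^ (2 * m) = (u ^ (2:ℤ)) ^ m := fun u m => by
    rw [← zpow_mul]
  rw [key, key, key, hx, hy, hz, trpow, trpow, trpow, tr_mul, tr_mul]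
  congr 1; funext i; fin_cases i <;> simp [Matrix.vecHead, Matrix.vecTail] <;> ring

lemma affz_mem : affz ∈ G6 := mul_mem affx_mem affy_mem

lemma tr_mem (t : Fin 3 → ℤ) : tr t ∈ G6 := by
  rw [tr_as_word]
  exact mul_mem (mul_mem (zpow_mem affx_mem _) (zpow_mem affy_mem _)) (zpow_mem affz_mem _)

lemma rep_mem (k : Fin 4) : rep k ∈ G6 := by
  fin_cases k <;> simp [rep, Matrix.vecHead, Matrix.vecTail]
  all_goals first | exact one_mem _ | exact affx_mem | exact affy_mem | exact affz_mem

/-- integer translations as elements of G6 -/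
noncomputable def trg (t : Fin 3 → ℤ) : G6 := ⟨tr t, tr_mem t⟩

noncomputable def repg (k : Fin 4) : G6 := ⟨rep k, rep_mem k⟩

lemma trg_mul (t s : Fin 3 → ℤ) : trg t * trg s = trg (t + s) := Subtype.ext (tr_mul t s)

lemma xg_def : (xg : Aff3) = affx := rfl
lemma yg_def : (yg : Aff3) = affy := rfl
lemma zg_def : (zg : Aff3) = affz := rfl

lemma trg_as_word (t : Fin 3 → ℤ) :
    trg t = xg ^ (2 * t 0) * yg ^ (2 * t 1) * zg ^ (2 * t 2) := by
  apply Subtype.ext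
  push_cast
  exact tr_as_word t

lemma g6_struct' (g : G6) : ∃ (t : Fin 3 → ℤ) (k : Fin 4), g = trg t * repg k := by
  obtain ⟨t, k, h⟩ := g6_struct (g : Aff3) g.2
  exact ⟨t, k, Subtype.ext h⟩

/-- homomorphisms out of G6 are determined by values on xg, yg -/
lemma g6_hom_ext {M : Type*} [Monoid M] {f g : G6 →* M}
    (hx : f xg = g xg) (hy : f yg = g yg) : f = g := by
  have htop : Subgroup.closure ({xg, yg} : Set G6) = ⊤ := by
    rw [eq_top_iff]
    intro γ _
    obtain ⟨t, k, rfl⟩ := g6_struct' γ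
    have hxm : xg ∈ Subgroup.closure ({xg, yg} : Set G6) := Subgroup.subset_closure (by simp)
    have hym : yg ∈ Subgroup.closure ({xg, yg} : Set G6) := Subgroup.subset_closure (by simp)
    have hzm : zg ∈ Subgroup.closure ({xg, yg} : Set G6) := mul_mem hxm hym
    have htr : trg t ∈ Subgroup.closure ({xg, yg} : Set G6) := by
      rw [trg_as_word]
      exact mul_mem (mul_mem (zpow_mem hxm _) (zpow_mem hym _)) (zpow_mem hzm _)
    refine mul_mem htr ?_
    have : ∀ k : Fin 4, repg k ∈ Subgroup.closure ({xg, yg} : Set G6) := by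
      intro k
      fin_cases k
      · exact one_mem _
      · exact hxm
      · exact hym
      · exact hzm
    exact this k
  exact MonoidHom.eq_of_eqOn_dense htop (by rintro u (rfl | rfl) <;> simpa)
/-! ### Part 1: T is characteristic -/

lemma mem_Tsub (γ : G6) :
    γ ∈ TT.subgroupOf G6 ↔ AffineEquiv.linearHom (γ : Aff3) = 1 := by
  rw [Subgroup.mem_subgroupOf]
  constructor
  · rintro ⟨-, h⟩; exact h
  · intro h; exact ⟨γ.2, h⟩

lemma sq_lin (γ : G6) : AffineEquiv.linearHom ((γ * γ : G6) : Aff3) = 1 := by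
  obtain ⟨t, k, h⟩ := g6_struct (γ : Aff3) γ.2
  have hc : ((γ * γ : G6) : Aff3) = (γ : Aff3) * (γ : Aff3) := rfl
  rw [hc, h, tr_rep_mul, mm_self, rep_zero, mul_one, lin_tr]

noncomputable def SqG : Subgroup G6 := Subgroup.closure {g : G6 | ∃ h : G6, g = h * h}

lemma Tsub_eq_SqG : TT.subgroupOf G6 = SqG := by
  apply le_antisymm
  · intro γ hγ
    rw [mem_Tsub] at hγ
    obtain ⟨t, k, rfl⟩ := g6_struct' γ
    have hlin : AffineEquiv.linearHom ((trg t * repg k : G6) : Aff3) = 1 := hγ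
    have : AffineEquiv.linearHom (rep k) = AffineEquiv.linearHom (rep 0) := by
      have hc : ((trg t * repg k : G6) : Aff3) = tr t * rep k := rfl
      rw [hc, lin_tr_rep] at hlin
      rw [hlin, rep_zero, map_one]
    have hk : k = 0 := lin_rep_inj this
    subst hk
    have hrep0 : repg 0 = 1 := Subtype.ext rep_zero
    rw [hrep0, mul_one, trg_as_word]
    have h2 : ∀ (u : G6) (m : ℤ), u ^ (2 * m) ∈ SqG := by
      intro u m
      have : u ^ (2 * m) = u ^ m * u ^ m := by
        rw [← zpow_add]; ring_nf
      rw [this]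
      exact Subgroup.subset_closure ⟨u ^ m, rfl⟩
    exact mul_mem (mul_mem (h2 xg _) (h2 yg _)) (h2 zg _)
  · rw [SqG, Subgroup.closure_le]
    rintro γ ⟨h, rfl⟩
    rw [SetLike.mem_coe, mem_Tsub]
    exact sq_lin h

lemma part1 (α : MulAut G6) :
    (TT.subgroupOf G6).map α.toMonoidHom = TT.subgroupOf G6 := by
  rw [Tsub_eq_SqG, SqG, MonoidHom.map_closure]
  congr 1
  ext g
  constructor
  · rintro ⟨-, ⟨h, rfl⟩, rfl⟩
    exact ⟨α h, by simp [map_mul]⟩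
  · rintro ⟨h, rfl⟩
    exact ⟨α⁻¹ h * α⁻¹ h, ⟨α⁻¹ h, rfl⟩, by simp [map_mul]⟩

lemma part1' (α : MulAut G6) (γ : G6) (h : γ ∈ TT.subgroupOf G6) :
    α γ ∈ TT.subgroupOf G6 := by
  rw [← part1 α]
  exact ⟨γ, h, rfl⟩
/-! ### The quotient Q -/

lemma mm_comm (k k' : Fin 4) : mm k k' = mm k' k := by fin_cases k <;> fin_cases k' <;> rfl

lemma lin_comm (g g' : Aff3) (hg : g ∈ G6) (hg' : g' ∈ G6) :
    AffineEquiv.linearHom g * AffineEquiv.linearHom g'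
      = AffineEquiv.linearHom g' * AffineEquiv.linearHom g := by
  obtain ⟨t, k, rfl⟩ := g6_struct g hg
  obtain ⟨s, k', rfl⟩ := g6_struct g' hg'
  rw [lin_tr_rep, lin_tr_rep]
  have key : ∀ a b : Fin 4, AffineEquiv.linearHom (rep a) * AffineEquiv.linearHom (rep b)
      = AffineEquiv.linearHom (rep (mm a b)) := by
    intro a b
    rw [← map_mul, rep_mul, lin_tr_rep]
  rw [key, key, mm_comm]

lemma repg_zero : repg 0 = 1 := Subtype.ext rep_zero
lemma repg_one : repg 1 = xg := rfl
lemma repg_two : repg 2 = yg := rfl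
lemma repg_three : repg 3 = zg := Subtype.ext rfl

lemma repg_cases (k : Fin 4) : repg k = 1 ∨ repg k = xg ∨ repg k = yg ∨ repg k = zg := by
  fin_cases k
  exacts [Or.inl repg_zero, Or.inr (Or.inl rfl), Or.inr (Or.inr (Or.inl rfl)),
    Or.inr (Or.inr (Or.inr (Subtype.ext rfl)))]

section Quot

variable {Q : Type} [Group Q] (q : G6 →* Q) (hk : q.ker = TT.subgroupOf G6)

include hk

lemma q_eq_one_iff (γ : G6) : q γ = 1 ↔ AffineEquiv.linearHom (γ : Aff3) = 1 := by
  rw [← MonoidHom.mem_ker, hk, mem_Tsub]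

lemma q_trg (t : Fin 3 → ℤ) : q (trg t) = 1 := by
  rw [q_eq_one_iff q hk]
  exact lin_tr t

lemma q_tr_mul (t : Fin 3 → ℤ) (γ : G6) : q (trg t * γ) = q γ := by
  rw [map_mul, q_trg q hk, one_mul]

lemma q_sq (γ : G6) : q γ * q γ = 1 := by
  rw [← map_mul, q_eq_one_iff q hk]
  exact sq_lin γ

lemma q_classes (g : G6) : ∃ k : Fin 4, q g = q (repg k) := by
  obtain ⟨t, k, rfl⟩ := g6_struct' g
  exact ⟨k, q_tr_mul q hk t _⟩

lemma q_comm (g g' : G6) : q (g * g') = q (g' * g) := by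
  have : q ((g * g') * (g' * g)⁻¹) = 1 := by
    rw [q_eq_one_iff q hk]
    have hc : (((g * g') * (g' * g)⁻¹ : G6) : Aff3)
        = ((g : Aff3) * g') * ((g' : Aff3) * g)⁻¹ := rfl
    rw [hc, map_mul, map_inv, map_mul, map_mul]
    rw [mul_inv_eq_one]
    exact lin_comm _ _ g.2 g'.2
  calc q (g * g') = q ((g * g') * (g' * g)⁻¹) * q (g' * g) := by
        rw [← map_mul]; group
    _ = q (g' * g) := by rw [this, one_mul]

lemma Q_comm (u v : Q) (hs : Function.Surjective q) : u * v = v * u := by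
  obtain ⟨g, rfl⟩ := hs u
  obtain ⟨g', rfl⟩ := hs v
  rw [← map_mul, ← map_mul, q_comm q hk]

lemma Q_cases (hs : Function.Surjective q) (u : Q) :
    u = 1 ∨ u = q xg ∨ u = q yg ∨ u = q xg * q yg := by
  obtain ⟨g, rfl⟩ := hs u
  obtain ⟨k, hkk⟩ := q_classes q hk g
  rcases repg_cases k with h | h | h | h <;> rw [h] at hkk
  · left; rw [hkk, map_one]
  · right; left; exact hkk
  · right; right; left; exact hkk
  · right; right; right; rw [hkk, ← map_mul]; rfl

lemma q_xg_ne_one : q xg ≠ 1 := by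
  intro h
  rw [q_eq_one_iff q hk] at h
  have : AffineEquiv.linearHom (rep 1) = AffineEquiv.linearHom (rep 0) := by
    rw [show AffineEquiv.linearHom (rep 1) = AffineEquiv.linearHom ((xg : G6) : Aff3) from rfl, h,
      rep_zero, map_one]
  exact absurd (lin_rep_inj this) (by decide)

lemma q_yg_ne_one : q yg ≠ 1 := by
  intro h
  rw [q_eq_one_iff q hk] at h
  have : AffineEquiv.linearHom (rep 2) = AffineEquiv.linearHom (rep 0) := by
    rw [show AffineEquiv.linearHom (rep 2) = AffineEquiv.linearHom ((yg : G6) : Aff3) from rfl, h,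
      rep_zero, map_one]
  exact absurd (lin_rep_inj this) (by decide)

/-- a hom out of Q is determined by its values on `q xg`, `q yg` -/
lemma Q_hom_ext (hs : Function.Surjective q) {f g : Q →* Q}
    (h1 : f (q xg) = g (q xg)) (h2 : f (q yg) = g (q yg)) : f = g := by
  ext u
  rcases Q_cases q hk hs u with rfl | rfl | rfl | rfl
  · rw [map_one, map_one]
  · exact h1
  · exact h2
  · rw [map_mul, map_mul, h1, h2]

end Quot
/-! ### The induced map Θ -/

section Theta

variable {Q : Type} [Group Q] (q : G6 →* Q) (hs : Function.Surjective q)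
  (hk : q.ker = TT.subgroupOf G6)

include hs hk

lemma ker_le_ker (α : MulAut G6) : q.ker ≤ (q.comp α.toMonoidHom).ker := by
  intro g hg
  rw [MonoidHom.mem_ker] at hg ⊢
  have : g ∈ TT.subgroupOf G6 := by rw [← hk]; exact hg
  have h2 : α g ∈ TT.subgroupOf G6 := part1' α g this
  have h3 : α g ∈ q.ker := by rw [hk]; exact h2
  exact h3

noncomputable def theta0 (α : MulAut G6) : Q →* Q :=
  (q.liftOfRightInverse (Function.surjInv hs) (Function.rightInverse_surjInv hs))
    ⟨q.comp α.toMonoidHom, ker_le_ker q hs hk α⟩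

lemma theta0_apply (α : MulAut G6) (g : G6) : theta0 q hs hk α (q g) = q (α g) :=
  MonoidHom.liftOfRightInverse_comp_apply _ _ _ _ g

lemma theta0_comp (α β : MulAut G6) (u : Q) :
    theta0 q hs hk α (theta0 q hs hk β u) = theta0 q hs hk (α * β) u := by
  obtain ⟨g, rfl⟩ := hs u
  rw [theta0_apply, theta0_apply, theta0_apply]
  rfl

lemma theta0_one (u : Q) : theta0 q hs hk 1 u = u := by
  obtain ⟨g, rfl⟩ := hs u
  rw [theta0_apply]
  rfl

noncomputable def theta1 (α : MulAut G6) : MulAut Q where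
  toFun := theta0 q hs hk α
  invFun := theta0 q hs hk α⁻¹
  left_inv u := by rw [theta0_comp, inv_mul_cancel, theta0_one]
  right_inv u := by rw [theta0_comp, mul_inv_cancel, theta0_one]
  map_mul' := map_mul _

noncomputable def Theta : MulAut G6 →* MulAut Q where
  toFun := theta1 q hs hk
  map_one' := by
    apply MulEquiv.ext
    intro u
    exact theta0_one q hs hk u
  map_mul' α β := by
    apply MulEquiv.ext
    intro u
    exact (theta0_comp q hs hk α β u).symm

lemma Theta_apply (α : MulAut G6) (g : G6) : Theta q hs hk α (q g) = q (α g) :=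
  theta0_apply q hs hk α g

end Theta
/-! ### Normalizer elements and the induced outer automorphisms -/

noncomputable def swapLin : V3 ≃ₗ[ℝ] V3 where
  toFun v := ![v 1, v 0, v 2]
  invFun v := ![v 1, v 0, v 2]
  map_add' u v := by funext i; fin_cases i <;> simp
  map_smul' c v := by funext i; fin_cases i <;> simp
  left_inv v := by funext i; fin_cases i <;> simp
  right_inv v := by funext i; fin_cases i <;> simp

noncomputable def cycLin : V3 ≃ₗ[ℝ] V3 where
  toFun v := ![v 2, v 0, v 1]
  invFun v := ![v 1, v 2, v 0]
  map_add' u v := by funext i; fin_cases i <;> simp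
  map_smul' c v := by funext i; fin_cases i <;> simp
  left_inv v := by funext i; fin_cases i <;> simp
  right_inv v := by funext i; fin_cases i <;> simp

noncomputable def n2 : Aff3 :=
  (swapLin.toAffineEquiv).trans (AffineEquiv.constVAdd ℝ V3 ![0, 0, -1/4])

noncomputable def n3 : Aff3 :=
  (cycLin.toAffineEquiv).trans (AffineEquiv.constVAdd ℝ V3 ![0, 1/4, -1/4])

lemma n2_apply (p : V3) (i : Fin 3) :
    n2 p i = ![p 1, p 0, p 2] i + ![(0:ℝ), 0, -1/4] i := by
  simp [n2, swapLin, AffineEquiv.trans_apply]; ring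

lemma n3_apply (p : V3) (i : Fin 3) :
    n3 p i = ![p 2, p 0, p 1] i + ![(0:ℝ), 1/4, -1/4] i := by
  simp [n3, cycLin, AffineEquiv.trans_apply]; ring

lemma K1 : n3 * affx = affy * n3 := by
  ext p i; fin_cases i <;>
    simp [aff_mul_apply, n3_apply, affx_apply, affy_apply, Matrix.vecHead, Matrix.vecTail] <;> ring

lemma K2 : n3 * affy = (tr ![-1,1,0] * affz) * n3 := by
  ext p i; fin_cases i <;>
    simp [aff_mul_apply, n3_apply, affz, tr_apply, affx_apply, affy_apply,
      Matrix.vecHead, Matrix.vecTail] <;> push_cast <;> ring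

lemma K3 : affx * n3 = n3 * (tr ![-1,1,0] * affz) := by
  ext p i; fin_cases i <;>
    simp [aff_mul_apply, n3_apply, affz, tr_apply, affx_apply, affy_apply,
      Matrix.vecHead, Matrix.vecTail] <;> push_cast <;> ring

lemma K0 (t : Fin 3 → ℤ) : n3 * tr t = tr ![t 2, t 0, t 1] * n3 := by
  ext p i; fin_cases i <;>
    simp [aff_mul_apply, n3_apply, tr_apply, Matrix.vecHead, Matrix.vecTail] <;> push_cast <;> ring

lemma J1 : n2 * affx = affy * n2 := by
  ext p i; fin_cases i <;>
    simp [aff_mul_apply, n2_apply, affx_apply, affy_apply, Matrix.vecHead, Matrix.vecTail] <;> ring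

lemma J2 : n2 * affy = (tr ![0,0,-1] * affx) * n2 := by
  ext p i; fin_cases i <;>
    simp [aff_mul_apply, n2_apply, tr_apply, affx_apply, affy_apply,
      Matrix.vecHead, Matrix.vecTail] <;> push_cast <;> ring

lemma J3 : affx * n2 = n2 * (tr ![0,0,1] * affy) := by
  ext p i; fin_cases i <;>
    simp [aff_mul_apply, n2_apply, tr_apply, affx_apply, affy_apply,
      Matrix.vecHead, Matrix.vecTail] <;> push_cast <;> ring

lemma map_conj_eq (n : Aff3)
    (hx1 : n * affx * n⁻¹ ∈ G6) (hy1 : n * affy * n⁻¹ ∈ G6)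
    (hx2 : n⁻¹ * affx * n ∈ G6) (hy2 : n⁻¹ * affy * n ∈ G6) :
    G6.map (MulAut.conj n).toMonoidHom = G6 := by
  have hle : ∀ m : Aff3, m * affx * m⁻¹ ∈ G6 → m * affy * m⁻¹ ∈ G6 →
      G6.map (MulAut.conj m).toMonoidHom ≤ G6 := by
    intro m h1 h2
    rw [show G6 = Subgroup.closure {affx, affy} from rfl, MonoidHom.map_closure,
      Subgroup.closure_le]
    rintro g ⟨h, hh, rfl⟩
    rcases hh with rfl | rfl
    · simpa [MulAut.conj, G6] using h1
    · simpa [MulAut.conj, G6] using h2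
  apply le_antisymm (hle n hx1 hy1)
  intro g hg
  refine ⟨n⁻¹ * g * n, ?_, by simp [MulAut.conj]; group⟩
  have := hle n⁻¹ (by simpa using hx2) (by simpa using hy2)
  exact this ⟨g, hg, by simp [MulAut.conj]⟩

noncomputable def mkAut (n : Aff3) (h : G6.map (MulAut.conj n).toMonoidHom = G6) :
    MulAut G6 :=
  (MulEquiv.subgroupMap (MulAut.conj n) G6).trans (MulEquiv.subgroupCongr h)

lemma mkAut_apply (n : Aff3) (h : G6.map (MulAut.conj n).toMonoidHom = G6) (γ : G6) :
    ((mkAut n h γ : G6) : Aff3) = n * γ * n⁻¹ := rfl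
lemma conj3_x : n3 * affx * n3⁻¹ = affy := by
  rw [mul_inv_eq_iff_eq_mul]; exact K1
lemma conj3_y : n3 * affy * n3⁻¹ = tr ![-1,1,0] * affz := by
  rw [mul_inv_eq_iff_eq_mul]; exact K2
lemma conj3_x' : n3⁻¹ * affx * n3 = tr ![-1,1,0] * affz := by
  rw [mul_assoc, K3, ← mul_assoc, inv_mul_cancel, one_mul]
lemma conj3_y' : n3⁻¹ * affy * n3 = affx := by
  rw [mul_assoc, ← K1, ← mul_assoc, inv_mul_cancel, one_mul]

lemma conj2_x : n2 * affx * n2⁻¹ = affy := by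
  rw [mul_inv_eq_iff_eq_mul]; exact J1
lemma conj2_y : n2 * affy * n2⁻¹ = tr ![0,0,-1] * affx := by
  rw [mul_inv_eq_iff_eq_mul]; exact J2
lemma conj2_x' : n2⁻¹ * affx * n2 = tr ![0,0,1] * affy := by
  rw [mul_assoc, J3, ← mul_assoc, inv_mul_cancel, one_mul]
lemma conj2_y' : n2⁻¹ * affy * n2 = affx := by
  rw [mul_assoc, ← J1, ← mul_assoc, inv_mul_cancel, one_mul]

lemma tr_rep_mem (t : Fin 3 → ℤ) (g : Aff3) (hg : g ∈ G6) : tr t * g ∈ G6 :=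
  mul_mem (tr_mem t) hg

lemma map3 : G6.map (MulAut.conj n3).toMonoidHom = G6 := by
  apply map_conj_eq
  · rw [conj3_x]; exact affy_mem
  · rw [conj3_y]; exact tr_rep_mem _ _ affz_mem
  · rw [conj3_x']; exact tr_rep_mem _ _ affz_mem
  · rw [conj3_y']; exact affx_mem

lemma map2 : G6.map (MulAut.conj n2).toMonoidHom = G6 := by
  apply map_conj_eq
  · rw [conj2_x]; exact affy_mem
  · rw [conj2_y]; exact tr_rep_mem _ _ affx_mem
  · rw [conj2_x']; exact tr_rep_mem _ _ affy_mem
  · rw [conj2_y']; exact affx_mem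

noncomputable def aut3 : MulAut G6 := mkAut n3 map3
noncomputable def aut2 : MulAut G6 := mkAut n2 map2

lemma aut3_x : aut3 xg = yg := Subtype.ext (by rw [aut3, mkAut_apply]; exact conj3_x)
lemma aut3_y : aut3 yg = trg ![-1,1,0] * zg :=
  Subtype.ext (by rw [aut3, mkAut_apply]; exact conj3_y)
lemma aut2_x : aut2 xg = yg := Subtype.ext (by rw [aut2, mkAut_apply]; exact conj2_x)
lemma aut2_y : aut2 yg = trg ![0,0,-1] * xg :=
  Subtype.ext (by rw [aut2, mkAut_apply]; exact conj2_y)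
/-! ### Surjectivity of Θ -/

section Surj

variable {Q : Type} [Group Q] (q : G6 →* Q) (hs : Function.Surjective q)
  (hk : q.ker = TT.subgroupOf G6)

include hs hk

lemma mulaut_ext_Q (φ ψ : MulAut Q) (h1 : φ (q xg) = ψ (q xg)) (h2 : φ (q yg) = ψ (q yg)) :
    φ = ψ := by
  apply MulEquiv.ext
  intro u
  rcases Q_cases q hk hs u with rfl | rfl | rfl | rfl
  · rw [map_one, map_one]
  · exact h1
  · exact h2
  · rw [map_mul, map_mul, h1, h2]

lemma Th3_px : Theta q hs hk aut3 (q xg) = q yg := by rw [Theta_apply, aut3_x]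
lemma Th3_py : Theta q hs hk aut3 (q yg) = q xg * q yg := by
  rw [Theta_apply, aut3_y, q_tr_mul q hk, show zg = xg * yg from rfl, map_mul]
lemma Th2_px : Theta q hs hk aut2 (q xg) = q yg := by rw [Theta_apply, aut2_x]
lemma Th2_py : Theta q hs hk aut2 (q yg) = q xg := by
  rw [Theta_apply, aut2_y, q_tr_mul q hk]

lemma px_ne_py : q xg ≠ q yg := by
  intro h
  have h1 : q (xg * yg⁻¹) = 1 := by rw [map_mul, map_inv, h, mul_inv_cancel]
  rw [q_eq_one_iff q hk] at h1
  have hc : ((xg * yg⁻¹ : G6) : Aff3) = affx * affy⁻¹ := rfl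
  rw [hc, map_mul, map_inv, mul_inv_eq_one] at h1
  have : AffineEquiv.linearHom (rep 1) = AffineEquiv.linearHom (rep 2) := h1
  exact absurd (lin_rep_inj this) (by decide)

lemma theta_surjective : Function.Surjective (Theta q hs hk) := by
  intro φ
  have hpx : φ (q xg) ≠ 1 := fun h => q_xg_ne_one q hk (φ.injective (by rw [h, map_one]))
  have hpy : φ (q yg) ≠ 1 := fun h => q_yg_ne_one q hk (φ.injective (by rw [h, map_one]))
  have hne : φ (q xg) ≠ φ (q yg) := fun h => px_ne_py q hs hk (φ.injective h)
  have mul_app : ∀ (α β : MulAut G6) (u : Q),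
      Theta q hs hk (α * β) u = Theta q hs hk α (Theta q hs hk β u) := by
    intro α β u; rw [map_mul]; rfl
  rcases Q_cases q hk hs (φ (q xg)) with hx | hx | hx | hx <;>
    rcases Q_cases q hk hs (φ (q yg)) with hy | hy | hy | hy
  all_goals first
    | (exact absurd hx hpx)
    | (exact absurd hy hpy)
    | (exact absurd (hx.trans hy.symm) hne)
    | skip
  · -- (px, py) : identity
    exact ⟨1, mulaut_ext_Q q hs hk _ _ (by rw [map_one, MulAut.one_apply, hx])
      (by rw [map_one, MulAut.one_apply, hy])⟩
  · -- (px, px*py) : aut2 * aut3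
    refine ⟨aut2 * aut3, mulaut_ext_Q q hs hk _ _ ?_ ?_⟩
    · rw [mul_app, Th3_px, Th2_py, hx]
    · rw [mul_app, Th3_py, map_mul, Th2_px, Th2_py, hy, Q_comm q hk _ _ hs]
  · -- (py, px) : aut2
    exact ⟨aut2, mulaut_ext_Q q hs hk _ _ (by rw [Th2_px, hx]) (by rw [Th2_py, hy])⟩
  · -- (py, px*py) : aut3
    exact ⟨aut3, mulaut_ext_Q q hs hk _ _ (by rw [Th3_px, hx]) (by rw [Th3_py, hy])⟩
  · -- (px*py, px) : aut3 * aut3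
    refine ⟨aut3 * aut3, mulaut_ext_Q q hs hk _ _ ?_ ?_⟩
    · rw [mul_app, Th3_px, Th3_py, hx]
    · rw [mul_app, Th3_py, map_mul, Th3_px, Th3_py, hy]
      rw [show q yg * (q xg * q yg) = q xg * (q yg * q yg) by
        rw [Q_comm q hk (q yg) (q xg * q yg) hs]; group]
      rw [q_sq q hk, mul_one]
  · -- (px*py, py) : aut3 * aut2
    refine ⟨aut3 * aut2, mulaut_ext_Q q hs hk _ _ ?_ ?_⟩
    · rw [mul_app, Th2_px, Th3_py, hx]
    · rw [mul_app, Th2_py, Th3_px, hy]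

end Surj
/-! ### parameters of automorphisms in the kernel -/

def Dmul (D t : Fin 3 → ℤ) : Fin 3 → ℤ := fun i => D i * t i

def Dvec (τ σ : Fin 3 → ℤ) : Fin 3 → ℤ := ![2 * τ 0 + 1, 2 * σ 1 + 1, 2 * (τ 2 - σ 2) + 1]

def Good (α : MulAut G6) (τ σ : Fin 3 → ℤ) : Prop :=
  α xg = trg τ * xg ∧ α yg = trg σ * yg

lemma trg_zero : trg 0 = 1 := Subtype.ext tr_zero

lemma tr_zpow (s : Fin 3 → ℤ) (n : ℤ) : (tr s) ^ n = tr (n • s) := by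
  induction n using Int.induction_on with
  | zero => simp [tr_zero]
  | succ m ih => rw [zpow_add_one, ih, tr_mul]; congr 1; funext i; simp; ring
  | pred m ih => rw [zpow_sub_one, ih, tr_inv, tr_mul]; congr 1; funext i; simp; ring

lemma trg_zpow (s : Fin 3 → ℤ) (n : ℤ) : (trg s) ^ n = trg (n • s) := by
  apply Subtype.ext
  push_cast
  exact tr_zpow s n

lemma rep1_eq : rep 1 = affx := rfl
lemma rep2_eq : rep 2 = affy := rfl
lemma rep3_eq : rep 3 = affz := rfl

lemma sq_tr_xg (w : Fin 3 → ℤ) :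
    (trg w * xg) * (trg w * xg) = trg ![2 * w 0 + 1, 0, 0] := by
  apply Subtype.ext
  have hc : (((trg w * xg) * (trg w * xg) : G6) : Aff3) = (tr w * rep 1) * (tr w * rep 1) := rfl
  rw [hc, tr_rep_mul, mm_self, rep_zero, mul_one]
  congr 1
  funext i; fin_cases i <;> simp [mk3, cc, Matrix.vecHead, Matrix.vecTail] <;> ring

lemma sq_tr_yg (w : Fin 3 → ℤ) :
    (trg w * yg) * (trg w * yg) = trg ![0, 2 * w 1 + 1, 0] := by
  apply Subtype.ext
  have hc : (((trg w * yg) * (trg w * yg) : G6) : Aff3) = (tr w * rep 2) * (tr w * rep 2) := rfl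
  rw [hc, tr_rep_mul, mm_self, rep_zero, mul_one]
  congr 1
  funext i; fin_cases i <;> simp [mk3, cc, Matrix.vecHead, Matrix.vecTail] <;> ring

lemma sq_tr_zg (w : Fin 3 → ℤ) :
    (trg w * zg) * (trg w * zg) = trg ![0, 0, 2 * w 2 + 1] := by
  apply Subtype.ext
  have hc : (((trg w * zg) * (trg w * zg) : G6) : Aff3) = (tr w * rep 3) * (tr w * rep 3) := rfl
  rw [hc, tr_rep_mul, mm_self, rep_zero, mul_one]
  congr 1
  funext i; fin_cases i <;> simp [mk3, cc, Matrix.vecHead, Matrix.vecTail] <;> ring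

lemma xy_to_z (τ σ : Fin 3 → ℤ) :
    (trg τ * xg) * (trg σ * yg) = trg (τ + mk3 1 σ) * zg := by
  apply Subtype.ext
  have hc : (((trg τ * xg) * (trg σ * yg) : G6) : Aff3) = (tr τ * rep 1) * (tr σ * rep 2) := rfl
  rw [hc, tr_rep_mul]
  have h1 : mm 1 2 = 3 := rfl
  have h2 : cc 1 2 = ![0,0,0] := rfl
  rw [h1, h2]
  have : ((trg (τ + mk3 1 σ) * zg : G6) : Aff3) = tr (τ + mk3 1 σ) * rep 3 := rfl
  rw [this]
  have hz : τ + mk3 1 σ + ![0,0,0] = τ + mk3 1 σ := by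
    funext i; fin_cases i <;> simp [Matrix.vecHead, Matrix.vecTail]
  rw [hz]

lemma good_z {α : MulAut G6} {τ σ : Fin 3 → ℤ} (h : Good α τ σ) :
    α zg = trg (τ + mk3 1 σ) * zg := by
  have : α zg = α xg * α yg := by rw [show zg = xg * yg from rfl, map_mul]
  rw [this, h.1, h.2, xy_to_z]

lemma good_act {α : MulAut G6} {τ σ : Fin 3 → ℤ} (h : Good α τ σ) (t : Fin 3 → ℤ) :
    α (trg t) = trg (Dmul (Dvec τ σ) t) := by
  rw [trg_as_word, map_mul, map_mul, map_zpow, map_zpow, map_zpow, h.1, h.2, good_z h]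
  have key : ∀ (u : G6) (v : Fin 3 → ℤ) (m : ℤ), u * u = trg v → u ^ (2 * m) = trg (m • v) := by
    intro u v m hu
    rw [zpow_mul,
      show u ^ (2:ℤ) = u * u from by rw [show (2:ℤ) = (2:ℕ) from rfl, zpow_natCast, pow_two],
      hu, trg_zpow]
  rw [key _ _ _ (sq_tr_xg τ), key _ _ _ (sq_tr_yg σ), key _ _ _ (sq_tr_zg (τ + mk3 1 σ)),
    trg_mul, trg_mul]
  congr 1
  funext i; fin_cases i <;>
    simp [Dmul, Dvec, mk3, Matrix.vecHead, Matrix.vecTail] <;> ring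

lemma good_comp {α₁ α₂ : MulAut G6} {τ₁ σ₁ τ₂ σ₂ : Fin 3 → ℤ}
    (h₁ : Good α₁ τ₁ σ₁) (h₂ : Good α₂ τ₂ σ₂) :
    Good (α₁ * α₂) (Dmul (Dvec τ₁ σ₁) τ₂ + τ₁) (Dmul (Dvec τ₁ σ₁) σ₂ + σ₁) := by
  constructor
  · show α₁ (α₂ xg) = _
    rw [h₂.1, map_mul, h₁.1, good_act h₁, ← mul_assoc, trg_mul]
  · show α₁ (α₂ yg) = _
    rw [h₂.2, map_mul, h₁.2, good_act h₁, ← mul_assoc, trg_mul]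

lemma good_congr {α : MulAut G6} {τ σ τ' σ' : Fin 3 → ℤ}
    (h : Good α τ σ) (h1 : τ' = τ) (h2 : σ' = σ) : Good α τ' σ' := by
  rw [h1, h2]; exact h

lemma good_one : Good 1 0 0 := by
  constructor <;> rw [trg_zero, one_mul] <;> rfl

lemma good_unique {α : MulAut G6} {τ σ τ' σ' : Fin 3 → ℤ}
    (h : Good α τ σ) (h' : Good α τ' σ') : τ = τ' ∧ σ = σ' := by
  have e1 : trg τ * xg = trg τ' * xg := by rw [← h.1, ← h'.1]
  have e2 : trg σ * yg = trg σ' * yg := by rw [← h.2, ← h'.2]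
  have e1' : trg τ = trg τ' := mul_right_cancel e1
  have e2' : trg σ = trg σ' := mul_right_cancel e2
  exact ⟨tr_injective (congrArg Subtype.val e1'), tr_injective (congrArg Subtype.val e2')⟩

lemma good_zpow {α : MulAut G6} {τ σ : Fin 3 → ℤ}
    (h : Good α τ σ) (h0 : τ 0 = 0) (h1 : σ 1 = 0) (h2 : τ 2 = σ 2) (n : ℤ) :
    Good (α ^ n) (n • τ) (n • σ) := by
  have hD : Dvec τ σ = ![1,1,1] := by
    funext i; fin_cases i <;> simp [Dvec, h0, h1, Matrix.vecHead, Matrix.vecTail] <;> omega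
  have hinv : Good α⁻¹ (-τ) (-σ) := by
    constructor
    · apply α.injective
      show α (α⁻¹ xg) = _
      rw [MulAut.apply_inv_self, map_mul, h.1, good_act h, hD, ← mul_assoc, trg_mul]
      have : Dmul ![1,1,1] (-τ) + τ = 0 := by
        funext i; fin_cases i <;> simp [Dmul, Matrix.vecHead, Matrix.vecTail]
      rw [this, trg_zero, one_mul]
    · apply α.injective
      show α (α⁻¹ yg) = _
      rw [MulAut.apply_inv_self, map_mul, h.2, good_act h, hD, ← mul_assoc, trg_mul]
      have : Dmul ![1,1,1] (-σ) + σ = 0 := by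
        funext i; fin_cases i <;> simp [Dmul, Matrix.vecHead, Matrix.vecTail]
      rw [this, trg_zero, one_mul]
  induction n using Int.induction_on with
  | zero => simpa using good_one
  | succ m ih =>
    have hc := good_comp ih h
    rw [zpow_add_one]
    refine good_congr hc ?_ ?_ <;> (funext i; fin_cases i) <;>
      simp [Dmul, Dvec, smul_eq_mul, Matrix.vecHead, Matrix.vecTail, h0, h1, ← h2] <;> ring
  | pred m ih =>
    have hc := good_comp ih hinv
    rw [zpow_sub_one]
    refine good_congr hc ?_ ?_ <;> (funext i; fin_cases i) <;>
      simp [Dmul, Dvec, smul_eq_mul, Matrix.vecHead, Matrix.vecTail, h0, h1, ← h2] <;> ring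
/-! ### generator parameter facts -/

lemma affx_sq : affx * affx = tr ![1,0,0] := by
  have := rep_mul 1 1
  simpa [rep, mm, cc, Matrix.vecHead, Matrix.vecTail, rep_zero] using this

lemma affy_sq : affy * affy = tr ![0,1,0] := by
  have := rep_mul 2 2
  simpa [rep, mm, cc, Matrix.vecHead, Matrix.vecTail, rep_zero] using this

lemma affz_sq : affz * affz = tr ![0,0,1] := by
  have := rep_mul 3 3
  simpa [rep, mm, cc, Matrix.vecHead, Matrix.vecTail, rep_zero] using this

lemma affx_inv : affx⁻¹ = tr ![-1,0,0] * affx := by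
  apply inv_eq_of_mul_eq_one_left
  rw [mul_assoc, affx_sq, tr_mul]
  have : (![-1,0,0] + ![1,0,0] : Fin 3 → ℤ) = 0 := by
    funext i; fin_cases i <;> simp
  rw [this, tr_zero]

lemma affy_inv : affy⁻¹ = tr ![0,-1,0] * affy := by
  apply inv_eq_of_mul_eq_one_left
  rw [mul_assoc, affy_sq, tr_mul]
  have : (![0,-1,0] + ![0,1,0] : Fin 3 → ℤ) = 0 := by
    funext i; fin_cases i <;> simp
  rw [this, tr_zero]

lemma xg_inv : xg⁻¹ = trg ![-1,0,0] * xg := Subtype.ext affx_inv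
lemma yg_inv : yg⁻¹ = trg ![0,-1,0] * yg := Subtype.ext affy_inv
lemma yg_sq : yg ^ 2 = trg ![0,1,0] := Subtype.ext (by rw [pow_two]; exact affy_sq)
lemma zg_sq : zg ^ 2 = trg ![0,0,1] := Subtype.ext (by rw [pow_two]; exact affz_sq)

lemma conjx_y : affx * affy * affx⁻¹ = tr ![1,-1,1] * affy := by
  rw [affx_inv]
  ext p i; fin_cases i <;>
    simp [aff_mul_apply, tr_apply, affx_apply, affy_apply, Matrix.vecHead, Matrix.vecTail] <;>
    push_cast <;> ring

lemma conjy_x : affy * affx * affy⁻¹ = tr ![-1,1,-1] * affx := by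
  rw [affy_inv]
  ext p i; fin_cases i <;>
    simp [aff_mul_apply, tr_apply, affx_apply, affy_apply, Matrix.vecHead, Matrix.vecTail] <;>
    push_cast <;> ring

lemma gconjx : Good (MulAut.conj xg) 0 ![1,-1,1] := by
  constructor
  · rw [trg_zero, one_mul]
    show xg * xg * xg⁻¹ = xg
    group
  · show xg * yg * xg⁻¹ = trg ![1,-1,1] * yg
    exact Subtype.ext conjx_y

lemma gconjy : Good (MulAut.conj yg) ![-1,1,-1] 0 := by
  constructor
  · show yg * xg * yg⁻¹ = trg ![-1,1,-1] * xg
    exact Subtype.ext conjy_x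
  · rw [trg_zero, one_mul]
    show yg * yg * yg⁻¹ = yg
    group
/-! ### the kernel of Θ -/

lemma mulaut_ext_G6 {α β : MulAut G6} (hx : α xg = β xg) (hy : α yg = β yg) : α = β :=
  MulEquiv.toMonoidHom_injective (g6_hom_ext hx hy)

section Ker

variable {Q : Type} [Group Q] (q : G6 →* Q) (hs : Function.Surjective q)
  (hk : q.ker = TT.subgroupOf G6)

include hs hk

lemma ker_good {α : MulAut G6} (hα : α ∈ (Theta q hs hk).ker) :
    ∃ τ σ : Fin 3 → ℤ, Good α τ σ := by
  rw [MonoidHom.mem_ker] at hα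
  have hqx : q (α xg) = q xg := by
    rw [← Theta_apply q hs hk α xg, hα, MulAut.one_apply]
  have hqy : q (α yg) = q yg := by
    rw [← Theta_apply q hs hk α yg, hα, MulAut.one_apply]
  obtain ⟨t, k, hxk⟩ := g6_struct' (α xg)
  obtain ⟨s, k', hyk⟩ := g6_struct' (α yg)
  have hk1 : k = 1 := by
    have h1 : q (repg k) = q xg := by
      rw [← q_tr_mul q hk t (repg k), ← hxk, hqx]
    have h2 : q (repg k * xg⁻¹) = 1 := by rw [map_mul, map_inv, h1, mul_inv_cancel]
    rw [q_eq_one_iff q hk] at h2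
    have hc : ((repg k * xg⁻¹ : G6) : Aff3) = rep k * affx⁻¹ := rfl
    rw [hc, map_mul, map_inv, mul_inv_eq_one] at h2
    exact lin_rep_inj h2
  have hk2 : k' = 2 := by
    have h1 : q (repg k') = q yg := by
      rw [← q_tr_mul q hk s (repg k'), ← hyk, hqy]
    have h2 : q (repg k' * yg⁻¹) = 1 := by rw [map_mul, map_inv, h1, mul_inv_cancel]
    rw [q_eq_one_iff q hk] at h2
    have hc : ((repg k' * yg⁻¹ : G6) : Aff3) = rep k' * affy⁻¹ := rfl
    rw [hc, map_mul, map_inv, mul_inv_eq_one] at h2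
    exact lin_rep_inj h2
  subst hk1; subst hk2
  exact ⟨t, s, hxk, hyk⟩

lemma ker_constraints {α : MulAut G6} (hα : α ∈ (Theta q hs hk).ker)
    {τ σ : Fin 3 → ℤ} (gα : Good α τ σ) :
    (τ 0 = 0 ∨ τ 0 = -1) ∧ (σ 1 = 0 ∨ σ 1 = -1) ∧ (σ 2 = τ 2 ∨ σ 2 = τ 2 + 1) := by
  obtain ⟨τ', σ', gβ⟩ := ker_good q hs hk (inv_mem hα)
  have hDD : ∀ i, Dvec τ' σ' i * Dvec τ σ i = 1 := by
    intro i
    have h1 : ∀ t : Fin 3 → ℤ, trg t = trg (Dmul (Dvec τ' σ') (Dmul (Dvec τ σ) t)) := by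
      intro t
      have e1 : α⁻¹ (α (trg t)) = trg t := by
        rw [show α⁻¹ (α (trg t)) = (α⁻¹ * α) (trg t) from rfl, inv_mul_cancel,
          MulAut.one_apply]
      rw [← e1, good_act gα, good_act gβ]
    have h2 := tr_injective (congrArg Subtype.val (h1 (fun _ => 1)))
    have h3 := congrFun h2 i
    simp only [Dmul, mul_one] at h3
    exact h3.symm
  have hunit : ∀ i, Dvec τ σ i = 1 ∨ Dvec τ σ i = -1 := by
    intro i
    exact Int.isUnit_iff.mp (IsUnit.of_mul_eq_one _ (by rw [mul_comm]; exact hDD i))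
  have h0 := hunit 0
  have h1 := hunit 1
  have h2 := hunit 2
  simp [Dvec, Matrix.vecHead, Matrix.vecTail] at h0 h1 h2
  exact ⟨by omega, by omega, by omega⟩

end Ker
section Ker2

variable {Q : Type} [Group Q] (q : G6 →* Q) (hs : Function.Surjective q)
  (hk : q.ker = TT.subgroupOf G6)

include hs hk

lemma ker_subset (a b c e : MulAut G6)
    (hax : a xg = xg⁻¹) (hay : a yg = yg)
    (hbx : b xg = xg) (hby : b yg = yg⁻¹)
    (hcx : c xg = xg) (hcy : c yg = zg ^ 2 * yg)
    (hex : e xg = yg ^ 2 * xg) (hey : e yg = yg) :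
    (Theta q hs hk).ker ≤ Subgroup.closure
      ({a, b, c, e} ∪ Set.range (MulAut.conj : G6 →* MulAut G6)) := by
  set H := Subgroup.closure
      ({a, b, c, e} ∪ Set.range (MulAut.conj : G6 →* MulAut G6)) with hH
  have ha : a ∈ H := Subgroup.subset_closure (Or.inl (by simp))
  have hb : b ∈ H := Subgroup.subset_closure (Or.inl (by simp))
  have hc : c ∈ H := Subgroup.subset_closure (Or.inl (by simp))
  have he : e ∈ H := Subgroup.subset_closure (Or.inl (by simp))
  have hcj : ∀ g : G6, MulAut.conj g ∈ H :=
    fun g => Subgroup.subset_closure (Or.inr ⟨g, rfl⟩)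
  have ga : Good a ![-1,0,0] 0 :=
    ⟨by rw [hax, xg_inv], by rw [hay, trg_zero, one_mul]⟩
  have gb : Good b 0 ![0,-1,0] :=
    ⟨by rw [hbx, trg_zero, one_mul], by rw [hby, yg_inv]⟩
  have gc : Good c 0 ![0,0,1] :=
    ⟨by rw [hcx, trg_zero, one_mul], by rw [hcy, zg_sq]⟩
  have ge : Good e ![0,1,0] 0 :=
    ⟨by rw [hex, yg_sq], by rw [hey, trg_zero, one_mul]⟩
  have gu4 : Good (a * MulAut.conj yg * c) ![0,1,-1] ![0,0,-1] := by
    refine good_congr (good_comp (good_comp ga gconjy) gc) ?_ ?_ <;>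
      (funext i; fin_cases i <;> decide)
  have gu2 : Good (b * MulAut.conj xg * c) 0 ![1,0,0] := by
    refine good_congr (good_comp (good_comp gb gconjx) gc) ?_ ?_ <;>
      (funext i; fin_cases i <;> decide)
  have hu4 : a * MulAut.conj yg * c ∈ H := mul_mem (mul_mem ha (hcj yg)) hc
  have hu2 : b * MulAut.conj xg * c ∈ H := mul_mem (mul_mem hb (hcj xg)) hc
  have triv : ∀ (β : MulAut G6) (τ σ : Fin 3 → ℤ), Good β τ σ →
      τ 0 = 0 → σ 1 = 0 → σ 2 = τ 2 → β ∈ H := by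
    intro β τ σ gβ h0 h1 h2
    have p1 := good_zpow ge (by simp) (by simp) (by simp) (τ 1 + τ 2)
    have p2 := good_zpow gu4 (by simp) (by simp)
      (by simp [Matrix.vecHead, Matrix.vecTail]) (-(τ 2))
    have p3 := good_zpow gu2 (by simp) (by simp)
      (by simp [Matrix.vecHead, Matrix.vecTail]) (σ 0)
    have gr : Good (e ^ (τ 1 + τ 2) * (a * MulAut.conj yg * c) ^ (-(τ 2))
        * (b * MulAut.conj xg * c) ^ (σ 0)) τ σ := by
      refine good_congr (good_comp (good_comp p1 p2) p3) ?_ ?_ <;>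
        funext i <;> fin_cases i <;>
        simp [Dmul, Dvec, smul_eq_mul, Matrix.vecHead, Matrix.vecTail, h0, h1, h2] <;>
        ring
    have heq : β = e ^ (τ 1 + τ 2) * (a * MulAut.conj yg * c) ^ (-(τ 2))
        * (b * MulAut.conj xg * c) ^ (σ 0) :=
      mulaut_ext_G6 (gβ.1.trans gr.1.symm) (gβ.2.trans gr.2.symm)
    rw [heq]
    exact mul_mem (mul_mem (zpow_mem he _) (zpow_mem hu4 _)) (zpow_mem hu2 _)
  intro α hα
  obtain ⟨τ, σ, gα⟩ := ker_good q hs hk hα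
  obtain ⟨h0, h1, h2⟩ := ker_constraints q hs hk hα gα
  have finish : ∀ w : MulAut G6, w ∈ H → ∀ τw σw, Good w τw σw →
      (Dmul (Dvec τ σ) τw + τ) 0 = 0 →
      (Dmul (Dvec τ σ) σw + σ) 1 = 0 →
      (Dmul (Dvec τ σ) σw + σ) 2 = (Dmul (Dvec τ σ) τw + τ) 2 →
      α ∈ H := by
    intro w hw τw σw gw c1 c2 c3
    have hm : α * w ∈ H := triv _ _ _ (good_comp gα gw) c1 c2 c3
    have : α = (α * w) * w⁻¹ := by group
    rw [this]
    exact mul_mem hm (inv_mem hw)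
  rcases h0 with h0 | h0 <;> rcases h1 with h1 | h1 <;> rcases h2 with h2 | h2
  · -- (0, 0, eq)
    exact triv α τ σ gα h0 h1 h2
  · -- (0, 0, +1) : w = c
    refine finish c hc 0 ![0,0,1] gc ?_ ?_ ?_ <;>
      (simp only [Dmul, Dvec, Pi.add_apply, Pi.zero_apply, Matrix.cons_val_zero,
        Matrix.cons_val_one, Matrix.cons_val_two, Matrix.head_cons, Matrix.tail_cons,
        Matrix.vecHead, Matrix.vecTail, Function.comp_apply, Fin.succ_zero_eq_one,
        Fin.succ_one_eq_two, mul_zero, mul_one, zero_add, add_zero]; omega)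
  · -- (0, -1, eq) : w = b
    refine finish b hb 0 ![0,-1,0] gb ?_ ?_ ?_ <;>
      (simp only [Dmul, Dvec, Pi.add_apply, Pi.zero_apply, Matrix.cons_val_zero,
        Matrix.cons_val_one, Matrix.cons_val_two, Matrix.head_cons, Matrix.tail_cons,
        Matrix.vecHead, Matrix.vecTail, Function.comp_apply, Fin.succ_zero_eq_one,
        Fin.succ_one_eq_two, mul_zero, mul_one, zero_add, add_zero]; omega)
  · -- (0, -1, +1) : w = b * c
    have gbc : Good (b * c) 0 ![0,-1,1] := by
      refine good_congr (good_comp gb gc) ?_ ?_ <;>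
        (funext i; fin_cases i <;> decide)
    refine finish (b * c) (mul_mem hb hc) 0 ![0,-1,1] gbc ?_ ?_ ?_ <;>
      (simp only [Dmul, Dvec, Pi.add_apply, Pi.zero_apply, Matrix.cons_val_zero,
        Matrix.cons_val_one, Matrix.cons_val_two, Matrix.head_cons, Matrix.tail_cons,
        Matrix.vecHead, Matrix.vecTail, Function.comp_apply, Fin.succ_zero_eq_one,
        Fin.succ_one_eq_two, mul_zero, mul_one, zero_add, add_zero]; omega)
  · -- (-1, 0, eq) : w = a
    refine finish a ha ![-1,0,0] 0 ga ?_ ?_ ?_ <;>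
      (simp only [Dmul, Dvec, Pi.add_apply, Pi.zero_apply, Matrix.cons_val_zero,
        Matrix.cons_val_one, Matrix.cons_val_two, Matrix.head_cons, Matrix.tail_cons,
        Matrix.vecHead, Matrix.vecTail, Function.comp_apply, Fin.succ_zero_eq_one,
        Fin.succ_one_eq_two, mul_zero, mul_one, zero_add, add_zero]; omega)
  · -- (-1, 0, +1) : w = a * c
    have gac : Good (a * c) ![-1,0,0] ![0,0,1] := by
      refine good_congr (good_comp ga gc) ?_ ?_ <;>
        (funext i; fin_cases i <;> decide)
    refine finish (a * c) (mul_mem ha hc) ![-1,0,0] ![0,0,1] gac ?_ ?_ ?_ <;>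
      (simp only [Dmul, Dvec, Pi.add_apply, Pi.zero_apply, Matrix.cons_val_zero,
        Matrix.cons_val_one, Matrix.cons_val_two, Matrix.head_cons, Matrix.tail_cons,
        Matrix.vecHead, Matrix.vecTail, Function.comp_apply, Fin.succ_zero_eq_one,
        Fin.succ_one_eq_two, mul_zero, mul_one, zero_add, add_zero]; omega)
  · -- (-1, -1, eq) : w = a * b
    have gab : Good (a * b) ![-1,0,0] ![0,-1,0] := by
      refine good_congr (good_comp ga gb) ?_ ?_ <;>
        (funext i; fin_cases i <;> decide)
    refine finish (a * b) (mul_mem ha hb) ![-1,0,0] ![0,-1,0] gab ?_ ?_ ?_ <;>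
      (simp only [Dmul, Dvec, Pi.add_apply, Pi.zero_apply, Matrix.cons_val_zero,
        Matrix.cons_val_one, Matrix.cons_val_two, Matrix.head_cons, Matrix.tail_cons,
        Matrix.vecHead, Matrix.vecTail, Function.comp_apply, Fin.succ_zero_eq_one,
        Fin.succ_one_eq_two, mul_zero, mul_one, zero_add, add_zero]; omega)
  · -- (-1, -1, +1) : w = a * b * c
    have gabc : Good (a * b * c) ![-1,0,0] ![0,-1,1] := by
      have gab : Good (a * b) ![-1,0,0] ![0,-1,0] := by
        refine good_congr (good_comp ga gb) ?_ ?_ <;>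
          (funext i; fin_cases i <;> decide)
      refine good_congr (good_comp gab gc) ?_ ?_ <;>
        (funext i; fin_cases i <;> decide)
    refine finish (a * b * c) (mul_mem (mul_mem ha hb) hc) ![-1,0,0] ![0,-1,1] gabc
        ?_ ?_ ?_ <;>
      (simp only [Dmul, Dvec, Pi.add_apply, Pi.zero_apply, Matrix.cons_val_zero,
        Matrix.cons_val_one, Matrix.cons_val_two, Matrix.head_cons, Matrix.tail_cons,
        Matrix.vecHead, Matrix.vecTail, Function.comp_apply, Fin.succ_zero_eq_one,
        Fin.succ_one_eq_two, mul_zero, mul_one, zero_add, add_zero]; omega)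

end Ker2
section Ker3

variable {Q : Type} [Group Q] (q : G6 →* Q) (hs : Function.Surjective q)
  (hk : q.ker = TT.subgroupOf G6)

include hs hk

lemma q_inv_self (γ : G6) : q γ⁻¹ = q γ := by
  rw [map_inv]
  exact inv_eq_of_mul_eq_one_right (q_sq q hk γ)

lemma subset_ker (a b c e : MulAut G6)
    (hax : a xg = xg⁻¹) (hay : a yg = yg)
    (hbx : b xg = xg) (hby : b yg = yg⁻¹)
    (hcx : c xg = xg) (hcy : c yg = zg ^ 2 * yg)
    (hex : e xg = yg ^ 2 * xg) (hey : e yg = yg) :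
    Subgroup.closure ({a, b, c, e} ∪ Set.range (MulAut.conj : G6 →* MulAut G6))
      ≤ (Theta q hs hk).ker := by
  rw [Subgroup.closure_le]
  have key : ∀ φ : MulAut G6, φ xg = xg ∨ q (φ xg) = q xg →
      φ yg = yg ∨ q (φ yg) = q yg → φ ∈ (Theta q hs hk).ker := by
    intro φ h1 h2
    rw [MonoidHom.mem_ker]
    apply mulaut_ext_Q q hs hk
    · rw [Theta_apply, MulAut.one_apply]
      rcases h1 with h | h
      · rw [h]
      · exact h
    · rw [Theta_apply, MulAut.one_apply]
      rcases h2 with h | h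
      · rw [h]
      · exact h
  rintro φ (hφ | ⟨g, rfl⟩)
  · simp only [Set.mem_insert_iff, Set.mem_singleton_iff] at hφ
    rcases hφ with rfl | rfl | rfl | rfl
    · exact key φ (Or.inr (by rw [hax, q_inv_self q hs hk])) (Or.inl hay)
    · exact key φ (Or.inl hbx) (Or.inr (by rw [hby, q_inv_self q hs hk]))
    · refine key φ (Or.inl hcx) (Or.inr ?_)
      rw [hcy, map_mul, zg_sq, q_trg q hk, one_mul]
    · refine key φ (Or.inr ?_) (Or.inl hey)
      rw [hex, map_mul, yg_sq, q_trg q hk, one_mul]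
  · refine key _ (Or.inr ?_) (Or.inr ?_)
    · show q (g * xg * g⁻¹) = q xg
      rw [map_mul, map_mul, map_inv,
        show q g * q xg = q xg * q g from Q_comm q hk _ _ hs,
        mul_assoc, mul_inv_cancel, mul_one]
    · show q (g * yg * g⁻¹) = q yg
      rw [map_mul, map_mul, map_inv,
        show q g * q yg = q yg * q g from Q_comm q hk _ _ hs,
        mul_assoc, mul_inv_cancel, mul_one]

end Ker3
/-- Every automorphism of `G₆` maps the translation subgroup `T` onto
itself (`T` is characteristic in `G₆`); and for any realization `q : G₆ → Q` of the
quotient `G₆/T` (a surjective homomorphism with kernel `T`), the induced homomorphism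
`Θ : Aut(G₆) → Aut(G₆/T)` is surjective, and the kernel of the induced map on
`Out(G₆)` is generated by the images of `a`, `b`, `c` and `e`; that is, the kernel of
`Θ` is the subgroup of `Aut(G₆)` generated by `a`, `b`, `c`, `e` together with the
inner automorphisms. -/
theorem statement8 :
    (∀ α : MulAut G6, (TT.subgroupOf G6).map α.toMonoidHom = TT.subgroupOf G6) ∧
    (∀ a b c e : MulAut G6,
      a xg = xg⁻¹ → a yg = yg →
      b xg = xg → b yg = yg⁻¹ →
      c xg = xg → c yg = zg ^ 2 * yg →
      e xg = yg ^ 2 * xg → e yg = yg →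
      ∀ (Q : Type) [Group Q] (q : G6 →* Q),
        Function.Surjective q → q.ker = TT.subgroupOf G6 →
        ∃ Θ : MulAut G6 →* MulAut Q,
          (∀ (α : MulAut G6) (g : G6), Θ α (q g) = q (α g)) ∧
          Function.Surjective Θ ∧
          Θ.ker = Subgroup.closure
            ({a, b, c, e} ∪ Set.range (MulAut.conj : G6 →* MulAut G6))) := by
  refine ⟨part1, ?_⟩
  intro a b c e hax hay hbx hby hcx hcy hex hey Q _ q hs hk
  refine ⟨Theta q hs hk, fun α g => Theta_apply q hs hk α g,
    theta_surjective q hs hk, ?_⟩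
  exact le_antisymm (ker_subset q hs hk a b c e hax hay hbx hby hcx hcy hex hey)
    (subset_ker q hs hk a b c e hax hay hbx hby hcx hcy hex hey)
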